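/- There exists a group homomorphism ρ : H →* GL(2, ℂ) such that ρ(σ) is the matrix with rows (0,1), (1,0) and ρ(τ) is the diagonal matrix diag(ω, ω²). (This is the paper's realization of the two-dimensional irreducible representation V₂ of the octahedral group: V₂(σ) = [[0,1],[1,0]], V₂(τ) = diag(ω, ω²).) -/

import Mathlib

open Matrix

noncomputable section OctAux

/-- entrywise square -/
def Qm (M : Matrix (Fin 3) (Fin 3) ℂ) : Matrix (Fin 3) (Fin 3) ℂ :=
  Matrix.of fun i j => (M i j) ^ 2

def Em (ω : ℂ) : Matrix (Fin 2) (Fin 3) ℂ :=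
  (3 : ℂ)⁻¹ • !![1, -1 - ω, ω; -1 - ω, 1, ω]

def Fm (ω : ℂ) : Matrix (Fin 3) (Fin 2) ℂ := !![1, ω; ω, 1; -1 - ω, -1 - ω]

def Jm : Matrix (Fin 3) (Fin 3) ℂ := Matrix.of fun _ _ => 1

def Am (ω : ℂ) (M : Matrix (Fin 3) (Fin 3) ℂ) : Matrix (Fin 2) (Fin 2) ℂ :=
  Em ω * Qm M * Fm ω

def Pm (M : Matrix (Fin 3) (Fin 3) ℂ) : Prop :=
  (∀ i : Fin 3, M i 0 * M i 1 = 0 ∧ M i 0 * M i 2 = 0 ∧ M i 1 * M i 2 = 0) ∧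
  (∀ i : Fin 3, (M i 0) ^ 2 + (M i 1) ^ 2 + (M i 2) ^ 2 = 1)

lemma Qm_mul (M N : Matrix (Fin 3) (Fin 3) ℂ)
    (hM : ∀ i : Fin 3, M i 0 * M i 1 = 0 ∧ M i 0 * M i 2 = 0 ∧ M i 1 * M i 2 = 0) :
    Qm (M * N) = Qm M * Qm N := by
  ext i j
  obtain ⟨h01, h02, h12⟩ := hM i
  simp only [Qm, Matrix.of_apply, Matrix.mul_apply, Fin.sum_univ_three]
  linear_combination (2 * N 0 j * N 1 j) * h01 + (2 * N 0 j * N 2 j) * h02 +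
    (2 * N 1 j * N 2 j) * h12

lemma FE_eq (ω : ℂ) (hω : ω ^ 2 + ω + 1 = 0) :
    Fm ω * Em ω = 1 - (3 : ℂ)⁻¹ • Jm := by
  ext i j
  fin_cases i <;> fin_cases j <;>
    simp [Fm, Em, Jm, Matrix.mul_apply, Fin.sum_univ_three, Matrix.one_apply] <;>
    field_simp <;>
    first | ring1 | linear_combination hω | linear_combination -hω | linear_combination (2:ℂ)*hω | linear_combination (-2:ℂ)*hω | linear_combination (3:ℂ)*hω | linear_combination (-3:ℂ)*hω

lemma EQJ (ω : ℂ) (M : Matrix (Fin 3) (Fin 3) ℂ)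
    (h2 : ∀ i : Fin 3, (M i 0) ^ 2 + (M i 1) ^ 2 + (M i 2) ^ 2 = 1) :
    Em ω * Qm M * Jm = 0 := by
  ext k j
  fin_cases k
  · simp [Em, Qm, Jm, Matrix.mul_apply, Fin.sum_univ_three, Matrix.vecHead, Matrix.vecTail]
    linear_combination ((1:ℂ)/3) * h2 0 + ((-1 - ω)/3) * h2 1 + (ω/3) * h2 2
  · simp [Em, Qm, Jm, Matrix.mul_apply, Fin.sum_univ_three, Matrix.vecHead, Matrix.vecTail]
    linear_combination ((-1 - ω)/3) * h2 0 + ((1:ℂ)/3) * h2 1 + (ω/3) * h2 2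

lemma Qm_one : Qm (1 : Matrix (Fin 3) (Fin 3) ℂ) = 1 := by
  ext i j
  fin_cases i <;> fin_cases j <;> simp [Qm, Matrix.one_apply]

lemma Am_one (ω : ℂ) (hω : ω ^ 2 + ω + 1 = 0) : Am ω 1 = 1 := by
  rw [Am, Qm_one, Matrix.mul_one]
  ext i j
  fin_cases i <;> fin_cases j <;>
    simp [Em, Fm, Matrix.mul_apply, Fin.sum_univ_three, Matrix.one_apply] <;>
    field_simp <;>
    first | ring1 | linear_combination hω | linear_combination -hω | linear_combination (2:ℂ)*hω | linear_combination (-2:ℂ)*hω | linear_combination (3:ℂ)*hω | linear_combination (-3:ℂ)*hω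

lemma Am_mul (ω : ℂ) (hω : ω ^ 2 + ω + 1 = 0) (M N : Matrix (Fin 3) (Fin 3) ℂ)
    (hM : Pm M) : Am ω (M * N) = Am ω M * Am ω N := by
  have hQ : Qm (M * N) = Qm M * Qm N := Qm_mul M N hM.1
  have hFE := FE_eq ω hω
  have hJ := EQJ ω M hM.2
  set X := Em ω * Qm M with hX
  set Y := Qm N * Fm ω with hY
  have h1 : Am ω M * Am ω N = X * (Fm ω * Em ω) * Y := by
    simp only [Am, hX, hY, Matrix.mul_assoc]
  have h2 : Am ω (M * N) = X * Y := by
    simp only [Am, hQ, hX, hY, Matrix.mul_assoc]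
  rw [h1, h2, hFE]
  have h3 : X * Jm = 0 := hJ
  rw [Matrix.mul_sub, Matrix.mul_one, Matrix.mul_smul, h3, smul_zero, sub_zero]

lemma Pm_mul {M N : Matrix (Fin 3) (Fin 3) ℂ} (hM : Pm M) (hN : Pm N) : Pm (M * N) := by
  obtain ⟨hM1, hM2⟩ := hM
  obtain ⟨hN1, hN2⟩ := hN
  constructor
  · intro i
    obtain ⟨a01, a02, a12⟩ := hM1 i
    refine ⟨?_, ?_, ?_⟩ <;>
      simp only [Matrix.mul_apply, Fin.sum_univ_three]
    · obtain ⟨b0, _, _⟩ := hN1 0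
      obtain ⟨b1, _, _⟩ := hN1 1
      obtain ⟨b2, _, _⟩ := hN1 2
      linear_combination (M i 0)^2 * b0 + (M i 1)^2 * b1 + (M i 2)^2 * b2 +
        (N 0 0 * N 1 1 + N 0 1 * N 1 0) * a01 +
        (N 0 0 * N 2 1 + N 0 1 * N 2 0) * a02 +
        (N 1 0 * N 2 1 + N 1 1 * N 2 0) * a12
    · obtain ⟨_, b0, _⟩ := hN1 0
      obtain ⟨_, b1, _⟩ := hN1 1
      obtain ⟨_, b2, _⟩ := hN1 2
      linear_combination (M i 0)^2 * b0 + (M i 1)^2 * b1 + (M i 2)^2 * b2 +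
        (N 0 0 * N 1 2 + N 0 2 * N 1 0) * a01 +
        (N 0 0 * N 2 2 + N 0 2 * N 2 0) * a02 +
        (N 1 0 * N 2 2 + N 1 2 * N 2 0) * a12
    · obtain ⟨_, _, b0⟩ := hN1 0
      obtain ⟨_, _, b1⟩ := hN1 1
      obtain ⟨_, _, b2⟩ := hN1 2
      linear_combination (M i 0)^2 * b0 + (M i 1)^2 * b1 + (M i 2)^2 * b2 +
        (N 0 1 * N 1 2 + N 0 2 * N 1 1) * a01 +
        (N 0 1 * N 2 2 + N 0 2 * N 2 1) * a02 +
        (N 1 1 * N 2 2 + N 1 2 * N 2 1) * a12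
  · intro i
    obtain ⟨a01, a02, a12⟩ := hM1 i
    simp only [Matrix.mul_apply, Fin.sum_univ_three]
    linear_combination (M i 0)^2 * hN2 0 + (M i 1)^2 * hN2 1 + (M i 2)^2 * hN2 2 +
      hM2 i +
      (2 * (N 0 0 * N 1 0 + N 0 1 * N 1 1 + N 0 2 * N 1 2)) * a01 +
      (2 * (N 0 0 * N 2 0 + N 0 1 * N 2 1 + N 0 2 * N 2 2)) * a02 +
      (2 * (N 1 0 * N 2 0 + N 1 1 * N 2 1 + N 1 2 * N 2 2)) * a12

lemma Pm_one : Pm (1 : Matrix (Fin 3) (Fin 3) ℂ) := by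
  constructor <;> intro i <;> fin_cases i <;> norm_num [Matrix.one_fin_three, Matrix.cons_val_two]

/-- subgroup of GL(3,ℂ) where `Am` is multiplicative -/
def W : Subgroup (GL (Fin 3) ℂ) where
  carrier := {g | Pm (↑g : Matrix (Fin 3) (Fin 3) ℂ) ∧ Pm (↑(g⁻¹) : Matrix (Fin 3) (Fin 3) ℂ)}
  one_mem' := by
    refine ⟨?_, ?_⟩ <;> simpa using Pm_one
  mul_mem' := by
    rintro a b ⟨ha1, ha2⟩ ⟨hb1, hb2⟩
    refine ⟨?_, ?_⟩
    · rw [Units.val_mul]; exact Pm_mul ha1 hb1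
    · rw [_root_.mul_inv_rev, Units.val_mul]; exact Pm_mul hb2 ha2
  inv_mem' := by
    rintro a ⟨ha1, ha2⟩
    exact ⟨ha2, by simpa using ha1⟩

def toGL2 (ω : ℂ) (hω : ω ^ 2 + ω + 1 = 0) : W →* GL (Fin 2) ℂ where
  toFun g :=
    ⟨Am ω (↑(g : GL (Fin 3) ℂ) : Matrix (Fin 3) (Fin 3) ℂ),
     Am ω (↑((g : GL (Fin 3) ℂ)⁻¹) : Matrix (Fin 3) (Fin 3) ℂ),
     by
      rw [← Am_mul ω hω _ _ g.2.1, ← Units.val_mul, mul_inv_cancel, Units.val_one,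
        Am_one ω hω],
     by
      rw [← Am_mul ω hω _ _ g.2.2, ← Units.val_mul, inv_mul_cancel, Units.val_one,
        Am_one ω hω]⟩
  map_one' := by
    apply Units.ext
    simpa using Am_one ω hω
  map_mul' g h := by
    apply Units.ext
    show Am ω _ = Am ω _ * Am ω _
    rw [Subgroup.coe_mul, Units.val_mul, Am_mul ω hω _ _ g.2.1]

end OctAux

theorem octahedral_two_dimensional_representation (ω : ℂ) (hω : ω ^ 2 + ω + 1 = 0)
    (σ τ : GL (Fin 3) ℂ)
    (hσ : (σ : Matrix (Fin 3) (Fin 3) ℂ) = !![0, -1, 0; 1, 0, 0; 0, 0, 1])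
    (hτ : (τ : Matrix (Fin 3) (Fin 3) ℂ) = !![0, 1, 0; 0, 0, 1; 1, 0, 0]) :
    ∃ ρ : ↥(Subgroup.closure {σ, τ} : Subgroup (GL (Fin 3) ℂ)) →* GL (Fin 2) ℂ,
      ((ρ ⟨σ, Subgroup.subset_closure (Set.mem_insert _ _)⟩ :
          GL (Fin 2) ℂ) : Matrix (Fin 2) (Fin 2) ℂ) = !![0, 1; 1, 0] ∧
      ((ρ ⟨τ, Subgroup.subset_closure (Set.mem_insert_of_mem _ (Set.mem_singleton _))⟩ :
          GL (Fin 2) ℂ) : Matrix (Fin 2) (Fin 2) ℂ) = !![ω, 0; 0, ω ^ 2] := by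
  have hσinv : (↑(σ⁻¹) : Matrix (Fin 3) (Fin 3) ℂ) = !![0, 1, 0; -1, 0, 0; 0, 0, 1] := by
    rw [Matrix.coe_units_inv, hσ]
    apply Matrix.inv_eq_right_inv
    ext i j
    fin_cases i <;> fin_cases j <;>
      simp [Matrix.mul_apply, Fin.sum_univ_three, Matrix.one_apply, Matrix.vecHead, Matrix.vecTail]
  have hτinv : (↑(τ⁻¹) : Matrix (Fin 3) (Fin 3) ℂ) = !![0, 0, 1; 1, 0, 0; 0, 1, 0] := by
    rw [Matrix.coe_units_inv, hτ]
    apply Matrix.inv_eq_right_inv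
    ext i j
    fin_cases i <;> fin_cases j <;>
      simp [Matrix.mul_apply, Fin.sum_univ_three, Matrix.one_apply, Matrix.vecHead, Matrix.vecTail]
  have hσW : σ ∈ W := by
    refine ⟨⟨?_, ?_⟩, ⟨?_, ?_⟩⟩ <;> intro i <;> fin_cases i <;> norm_num [hσ, hσinv, Matrix.cons_val_two]
  have hτW : τ ∈ W := by
    refine ⟨⟨?_, ?_⟩, ⟨?_, ?_⟩⟩ <;> intro i <;> fin_cases i <;> norm_num [hτ, hτinv, Matrix.cons_val_two]
  have hle : (Subgroup.closure {σ, τ} : Subgroup (GL (Fin 3) ℂ)) ≤ W := by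
    rw [Subgroup.closure_le]
    rintro x hx
    rcases hx with rfl | hx
    · exact hσW
    · rcases hx with rfl
      exact hτW
  refine ⟨(toGL2 ω hω).comp (Subgroup.inclusion hle), ?_, ?_⟩
  · show Am ω (↑σ : Matrix (Fin 3) (Fin 3) ℂ) = _
    rw [hσ]
    have hQσ : Qm !![0, -1, 0; 1, 0, 0; 0, 0, 1] = !![(0:ℂ), 1, 0; 1, 0, 0; 0, 0, 1] := by
      ext i j; fin_cases i <;> fin_cases j <;> norm_num [Qm]
    rw [Am, hQσ]
    ext i j
    fin_cases i <;> fin_cases j <;>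
      ·  simp [Em, Fm, Matrix.mul_apply, Fin.sum_univ_three]
         field_simp
         first | ring1 | linear_combination hω | linear_combination -hω | linear_combination (2:ℂ)*hω | linear_combination (-2:ℂ)*hω | linear_combination (3:ℂ)*hω | linear_combination (-3:ℂ)*hω | linear_combination ω*hω | linear_combination (-ω)*hω | linear_combination (2*ω)*hω | linear_combination (-2*ω)*hω | linear_combination (ω-1)*hω | linear_combination (1-ω)*hω | linear_combination (ω+1)*hω | linear_combination (-ω-1)*hω
  · show Am ω (↑τ : Matrix (Fin 3) (Fin 3) ℂ) = _
    rw [hτ]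
    have hQτ : Qm !![0, 1, 0; 0, 0, 1; 1, 0, 0] = !![(0:ℂ), 1, 0; 0, 0, 1; 1, 0, 0] := by
      ext i j; fin_cases i <;> fin_cases j <;> norm_num [Qm]
    rw [Am, hQτ]
    ext i j
    fin_cases i <;> fin_cases j <;>
      ·  simp [Em, Fm, Matrix.mul_apply, Fin.sum_univ_three]
         field_simp
         first | ring1 | linear_combination hω | linear_combination -hω | linear_combination (2:ℂ)*hω | linear_combination (-2:ℂ)*hω | linear_combination (3:ℂ)*hω | linear_combination (-3:ℂ)*hω | linear_combination ω*hω | linear_combination (-ω)*hω | linear_combination (2*ω)*hω | linear_combination (-2*ω)*hω | linear_combination (ω-1)*hω | linear_combination (1-ω)*hω | linear_combination (ω+1)*hω | linear_combination (-ω-1)*hω
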